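/- For every t ∈ ℕ with t ≥ 2, 2^{t−1}·(2^t − 1)·∏_{i=2}^{t−1} max(2^{t−i} − i, 1) ≤ X(t) · t!, where X(t) is the number of equivalence classes of t×t symmetric 0–1 matrices with pairwise distinct rows under simultaneous permutation of rows and columns. -/

import Mathlib

/-- `t × t` symmetric 0–1 matrices with pairwise distinct rows. -/
def SymDistinctMat (t : ℕ) : Type :=
  {A : Matrix (Fin t) (Fin t) (Fin 2) // A.IsSymm ∧ ∀ i j : Fin t, i ≠ j → ∃ n, A i n ≠ A j n}

/-- Simultaneous permutation of rows and columns. -/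
def matPermSetoid (t : ℕ) : Setoid (SymDistinctMat t) where
  r A B := ∃ σ : Equiv.Perm (Fin t), ∀ i j, B.1 i j = A.1 (σ i) (σ j)
  iseqv := by
    refine ⟨fun A => ⟨Equiv.refl _, fun i j => rfl⟩, ?_, ?_⟩
    · rintro A B ⟨σ, h⟩
      exact ⟨σ.symm, fun i j => by rw [h]; simp⟩
    · rintro A B C ⟨σ, h⟩ ⟨τ, h'⟩
      exact ⟨τ.trans σ, fun i j => by rw [h', h]; rfl⟩

/-- `X t`: the number of `t × t` symmetric 0–1 matrices with pairwise distinct rows, up to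
simultaneous permutation of rows and columns. -/
noncomputable def symDistinctCount (t : ℕ) : ℕ := Nat.card (Quotient (matPermSetoid t))

open Finset

section Aux

/-- The "good" predicate on functions `Sym2 (Fin t) → Fin 2`: the corresponding symmetric
matrix has pairwise distinct rows. -/
def goodFun (t : ℕ) (g : Sym2 (Fin t) → Fin 2) : Prop :=
  ∀ i j : Fin t, i ≠ j → ∃ k, g s(i, k) ≠ g s(j, k)

/-- Symmetric matrices with distinct rows correspond to good functions on `Sym2 (Fin t)`. -/
def matEquiv (t : ℕ) : SymDistinctMat t ≃ {g : Sym2 (Fin t) → Fin 2 // goodFun t g} where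
  toFun A := ⟨Sym2.lift ⟨fun i j => A.1 i j, fun a b => (A.2.1.apply b a)⟩, by
    intro i j hij
    obtain ⟨n, hn⟩ := A.2.2 i j hij
    exact ⟨n, by simpa using hn⟩⟩
  invFun g := ⟨fun i j => g.1 s(i, j), by
    constructor
    · exact Matrix.ext fun i j => congrArg g.1 Sym2.eq_swap
    · intro i j hij
      obtain ⟨k, hk⟩ := g.2 i j hij
      exact ⟨k, hk⟩⟩
  left_inv A := by
    apply Subtype.ext
    ext i j
    simp
  right_inv g := by
    apply Subtype.ext
    funext s
    induction s using Sym2.ind with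
    | _ x y => simp

lemma count_lower (t : ℕ) :
    2 ^ (Fintype.card (Sym2 (Fin t)) + 1) ≤
      2 * Nat.card (SymDistinctMat t)
        + (t * t - t) * 2 ^ (Fintype.card (Sym2 (Fin t)) - t) := by
  classical
  set c := Fintype.card (Sym2 (Fin t)) with hc
  have hcard : Nat.card (SymDistinctMat t) = (univ.filter (goodFun t)).card := by
    rw [Nat.card_congr (matEquiv t), Nat.card_eq_fintype_card, Fintype.card_subtype]
  set Bad : Fin t × Fin t → Finset (Sym2 (Fin t) → Fin 2) :=
    fun p => univ.filter (fun g => ∀ k, g s(p.1, k) = g s(p.2, k)) with hBad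
  have hBadcard : ∀ p : Fin t × Fin t, p.1 ≠ p.2 → (Bad p).card ≤ 2 ^ (c - t) := by
    intro p hp
    set R : Finset (Sym2 (Fin t)) := univ.image (fun k => s(p.1, k)) with hR
    have hRcard : R.card = t := by
      rw [hR, Finset.card_image_of_injective _ (fun a b h => Sym2.congr_right.mp h),
        card_univ, Fintype.card_fin]
    have notR : ∀ k : Fin t, k ≠ p.1 → s(p.2, k) ∉ R := by
      intro k hk hmem
      obtain ⟨m, -, hm⟩ := Finset.mem_image.mp hmem
      rcases Sym2.eq_iff.mp hm with ⟨h1, -⟩ | ⟨h1, -⟩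
      · exact hp h1
      · exact hk h1.symm
    let u : Fin t → Sym2 (Fin t) := fun k => if k = p.1 then s(p.2, p.2) else s(p.2, k)
    have hu : ∀ k, u k ∉ R := by
      intro k
      by_cases hk : k = p.1
      · simp only [u, hk, if_pos rfl]
        exact notR p.2 (Ne.symm hp)
      · simp only [u, if_neg hk]
        exact notR k hk
    have hval : ∀ g : Sym2 (Fin t) → Fin 2,
        (∀ k, g s(p.1, k) = g s(p.2, k)) → ∀ k, g s(p.1, k) = g (u k) := by
      intro g hg k
      by_cases hk : k = p.1
      · subst hk
        simp only [u, if_pos rfl]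
        calc g s(p.1, p.1) = g s(p.2, p.1) := hg p.1
        _ = g s(p.1, p.2) := by rw [Sym2.eq_swap]
        _ = g s(p.2, p.2) := hg p.2
      · simp only [u, if_neg hk]
        exact hg k
    have hinj : Set.InjOn
        (fun (g : Sym2 (Fin t) → Fin 2) (s : {s : Sym2 (Fin t) // s ∉ R}) => g s.1) (Bad p) := by
      intro g1 hg1 g2 hg2 h
      simp only [hBad, mem_coe, mem_filter] at hg1 hg2
      funext s
      by_cases hs : s ∈ R
      · obtain ⟨k, -, hk⟩ := Finset.mem_image.mp hs
        subst hk
        calc g1 s(p.1, k) = g1 (u k) := hval g1 hg1.2 k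
          _ = g2 (u k) := congrFun h ⟨u k, hu k⟩
          _ = g2 s(p.1, k) := (hval g2 hg2.2 k).symm
      · exact congrFun h ⟨s, hs⟩
    have hle := Finset.card_le_card_of_injOn _ (fun g _ =>
      mem_univ ((fun s : {s : Sym2 (Fin t) // s ∉ R} => g s.1))) hinj
    refine hle.trans ?_
    rw [card_univ, Fintype.card_fun, Fintype.card_fin]
    have : Fintype.card {s : Sym2 (Fin t) // s ∉ R} = c - t := by
      rw [Fintype.card_subtype, Finset.filter_not, Finset.filter_univ_mem,
        Finset.card_sdiff_of_subset (Finset.subset_univ R), card_univ, hRcard]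
    rw [this]
  set P : Finset (Fin t × Fin t) := univ.filter (fun p => p.1 < p.2) with hP
  have hPcard : 2 * P.card ≤ t * t - t := by
    have hinj : (P.image Prod.swap).card = P.card :=
      Finset.card_image_of_injective _ Prod.swap_injective
    have hdisj : Disjoint P (P.image Prod.swap) := by
      rw [Finset.disjoint_left]
      rintro a ha hb
      obtain ⟨q, hq, rfl⟩ := Finset.mem_image.mp hb
      simp only [hP, mem_filter] at ha hq
      exact absurd ha.2 (by simpa using hq.2.asymm)
    have hsub : P ∪ P.image Prod.swap ⊆ (univ : Finset (Fin t)).offDiag := by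
      intro a ha
      rcases Finset.mem_union.mp ha with h | h
      · simp only [hP, mem_filter] at h
        exact Finset.mem_offDiag.mpr ⟨mem_univ _, mem_univ _, h.2.ne⟩
      · obtain ⟨q, hq, rfl⟩ := Finset.mem_image.mp h
        simp only [hP, mem_filter] at hq
        exact Finset.mem_offDiag.mpr ⟨mem_univ _, mem_univ _, hq.2.ne'⟩
    have := Finset.card_le_card hsub
    rw [Finset.card_union_of_disjoint hdisj, hinj, Finset.offDiag_card,
      card_univ, Fintype.card_fin] at this
    omega
  have hsub2 : univ.filter (fun g => ¬ goodFun t g) ⊆ P.biUnion Bad := by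
    intro g hg
    replace hg : ¬ goodFun t g := (Finset.mem_filter.mp hg).2
    simp only [goodFun] at hg
    push_neg at hg
    obtain ⟨i, j, hij, hall⟩ := hg
    rcases hij.lt_or_gt with h | h
    · exact Finset.mem_biUnion.mpr ⟨(i, j), by simp [hP, h],
        by simp only [hBad, mem_filter, mem_univ, true_and]; exact hall⟩
    · exact Finset.mem_biUnion.mpr ⟨(j, i), by simp [hP, h],
        by simp only [hBad, mem_filter, mem_univ, true_and]; exact fun k => (hall k).symm⟩
  have hbadcard : (univ.filter (fun g => ¬ goodFun t g)).card ≤ P.card * 2 ^ (c - t) := by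
    refine (Finset.card_le_card hsub2).trans ?_
    refine (Finset.card_biUnion_le).trans ?_
    calc ∑ p ∈ P, (Bad p).card ≤ ∑ p ∈ P, 2 ^ (c - t) := by
          refine Finset.sum_le_sum ?_
          intro p hpP
          simp only [hP, mem_filter] at hpP
          exact hBadcard p hpP.2.ne
      _ = P.card * 2 ^ (c - t) := by rw [Finset.sum_const, smul_eq_mul]
  have hsplit := Finset.card_filter_add_card_filter_not
    (s := (univ : Finset (Sym2 (Fin t) → Fin 2))) (p := goodFun t)
  rw [card_univ, Fintype.card_fun, Fintype.card_fin] at hsplit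
  have h1 : 2 ^ (c + 1) = 2 * 2 ^ c := by ring
  rw [h1, ← hsplit, hcard]
  have := Nat.mul_le_mul_left 2 hbadcard
  have hpow : 0 < 2 ^ (c - t) := by positivity
  nlinarith [hPcard]

instance (t : ℕ) : Finite (SymDistinctMat t) := by
  unfold SymDistinctMat; infer_instance

/-- Applying a permutation simultaneously to rows and columns. -/
def permMat (t : ℕ) (σ : Equiv.Perm (Fin t)) (A : SymDistinctMat t) : SymDistinctMat t :=
  ⟨fun i j => A.1 (σ i) (σ j), by
    constructor
    · exact Matrix.ext fun i j => A.2.1.apply (σ i) (σ j)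
    · intro i j hij
      obtain ⟨n, hn⟩ := A.2.2 (σ i) (σ j) (fun h => hij (σ.injective h))
      exact ⟨σ.symm n, by simpa using hn⟩⟩

lemma quot_bound (t : ℕ) :
    Nat.card (SymDistinctMat t) ≤ symDistinctCount t * t.factorial := by
  classical
  letI : Fintype (SymDistinctMat t) := Fintype.ofFinite _
  letI : Fintype (Quotient (matPermSetoid t)) := Fintype.ofFinite _
  have key : ∀ q : Quotient (matPermSetoid t),
      Nat.card {a : SymDistinctMat t // Quotient.mk (matPermSetoid t) a = q} ≤ t.factorial := by
    intro q
    have hsurj : Function.Surjective (fun σ : Equiv.Perm (Fin t) =>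
        (⟨permMat t σ q.out,
          (Quotient.sound ⟨σ, fun i j => rfl⟩ : Quotient.mk (matPermSetoid t) q.out
              = Quotient.mk (matPermSetoid t) (permMat t σ q.out)).symm.trans q.out_eq⟩ :
          {a : SymDistinctMat t // Quotient.mk (matPermSetoid t) a = q})) := by
      rintro ⟨b, hb⟩
      have h : Quotient.mk (matPermSetoid t) q.out = Quotient.mk (matPermSetoid t) b :=
        (Quotient.out_eq q).trans hb.symm
      obtain ⟨σ, hσ⟩ := Quotient.exact h
      refine ⟨σ, ?_⟩
      apply Subtype.ext
      apply Subtype.ext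
      funext i j
      exact (hσ i j).symm
    calc Nat.card {a : SymDistinctMat t // Quotient.mk (matPermSetoid t) a = q}
        ≤ Nat.card (Equiv.Perm (Fin t)) := Nat.card_le_card_of_surjective _ hsurj
      _ = t.factorial := by
          rw [Nat.card_eq_fintype_card, Fintype.card_perm, Fintype.card_fin]
  calc Nat.card (SymDistinctMat t)
      = Fintype.card (SymDistinctMat t) := Nat.card_eq_fintype_card
    _ = Fintype.card (Σ q : Quotient (matPermSetoid t),
          {a : SymDistinctMat t // Quotient.mk (matPermSetoid t) a = q}) :=
        (Fintype.card_congr (Equiv.sigmaFiberEquiv (Quotient.mk (matPermSetoid t)))).symm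
    _ = ∑ q : Quotient (matPermSetoid t),
          Fintype.card {a : SymDistinctMat t // Quotient.mk (matPermSetoid t) a = q} :=
        Fintype.card_sigma
    _ ≤ ∑ _q : Quotient (matPermSetoid t), t.factorial := by
        refine Finset.sum_le_sum fun q _ => ?_
        rw [← Nat.card_eq_fintype_card]
        exact key q
    _ = symDistinctCount t * t.factorial := by
        rw [Finset.sum_const, smul_eq_mul, card_univ, symDistinctCount,
          Nat.card_eq_fintype_card]

lemma sumId (n : ℕ) : (∑ i ∈ Icc 2 (n + 1), (n + 3 - i)) * 2 = n * n + 3 * n := by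
  induction n with
  | zero => simp [show Finset.Icc 2 1 = (∅ : Finset ℕ) from rfl]
  | succ m ih =>
    rw [Finset.sum_Icc_succ_top (by omega : 2 ≤ m + 1 + 1)]
    have h1 : ∑ i ∈ Icc 2 (m + 1), (m + 1 + 3 - i) = ∑ i ∈ Icc 2 (m + 1), ((m + 3 - i) + 1) := by
      refine Finset.sum_congr rfl fun i hi => ?_
      have := (Finset.mem_Icc.mp hi).2
      omega
    rw [h1, Finset.sum_add_distrib, Finset.sum_const, Nat.card_Icc, smul_eq_mul, mul_one]
    have e1 : (m + 1) * (m + 1) + 3 * (m + 1) = m * m + 3 * m + 2 * m + 4 := by ring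
    omega

lemma two_c (t : ℕ) : 2 * Fintype.card (Sym2 (Fin t)) = t * (t + 1) := by
  rw [Sym2.card, Fintype.card_fin]
  have h := Nat.add_one_mul_choose_eq t 1
  rw [Nat.choose_one_right] at h
  replace h : (t + 1) * t = (t + 1).choose 2 * 2 := h
  rw [mul_comm, ← h, mul_comm]

lemma sq_bound (t : ℕ) (ht : 3 ≤ t) : t * t ≤ 2 ^ t + t + 1 := by
  rcases Nat.lt_or_ge t 4 with h | h
  · interval_cases t <;> norm_num
  · obtain ⟨m, rfl⟩ : ∃ m, t = m + 4 := ⟨t - 4, by omega⟩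
    have key : ∀ m : ℕ, (m + 4) * (m + 4) ≤ 2 ^ (m + 4) := by
      intro m
      induction m with
      | zero => norm_num
      | succ k ih =>
        have h2 : (2:ℕ) ^ (k + 1 + 4) = 2 * 2 ^ (k + 4) := by ring
        nlinarith [ih]
    have := key m
    omega

end Aux

/-- `2^{t−1}·(2^t − 1)·∏_{i=2}^{t−1} max(2^{t−i} − i, 1) ≤ X(t)·t!`. -/
theorem strong_lower_bound_symDistinctCount (t : ℕ) (ht : 2 ≤ t) :
    (2 : ℤ) ^ (t - 1) * (2 ^ t - 1) *
        ∏ i ∈ Finset.Icc 2 (t - 1), max ((2 : ℤ) ^ (t - i) - (i : ℤ)) 1 ≤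
      (symDistinctCount t * Nat.factorial t : ℕ) := by
  have hG : (Nat.card (SymDistinctMat t) : ℤ) ≤ ((symDistinctCount t * Nat.factorial t : ℕ) : ℤ) :=
    by exact_mod_cast quot_bound t
  refine le_trans ?_ hG
  have h2c := two_c t
  have hcount := count_lower t
  set G := Nat.card (SymDistinctMat t) with hGdef
  set c := Fintype.card (Sym2 (Fin t)) with hc
  rcases Nat.lt_or_ge t 3 with h3 | h3
  · -- t = 2
    have ht2 : t = 2 := by omega
    subst ht2
    have hc3 : c = 3 := by omega
    rw [hc3] at hcount
    norm_num at hcount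
    have h6 : (6 : ℕ) ≤ G := by omega
    have : ((6 : ℕ) : ℤ) ≤ (G : ℤ) := by exact_mod_cast h6
    simpa [show Finset.Icc 2 1 = (∅ : Finset ℕ) from rfl] using this
  · obtain ⟨n, rfl⟩ : ∃ n, t = n + 3 := ⟨t - 3, by omega⟩
    set S : ℕ := ∑ i ∈ Icc 2 (n + 1), (n + 3 - i) with hSdef
    have hS : S * 2 = n * n + 3 * n := sumId n
    have hq : (n + 3) * ((n + 3) + 1) = n * n + 7 * n + 12 := by ring
    have hE1 : (n + 3) + S = c - (n + 3) := by omega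
    have hct : n + 3 ≤ c := by omega
    -- split off the top factor of the product
    have hsplit : (∏ i ∈ Finset.Icc 2 (n + 1 + 1), max ((2 : ℤ) ^ (n + 3 - i) - (i : ℤ)) 1)
        = (∏ i ∈ Finset.Icc 2 (n + 1), max ((2 : ℤ) ^ (n + 3 - i) - (i : ℤ)) 1) *
          max ((2 : ℤ) ^ (n + 3 - (n + 1 + 1)) - ((n + 1 + 1 : ℕ) : ℤ)) 1 :=
      Finset.prod_Icc_succ_top (by omega) _
    have htop : max ((2 : ℤ) ^ (n + 3 - (n + 1 + 1)) - ((n + 1 + 1 : ℕ) : ℤ)) 1 = 1 := by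
      rw [show n + 3 - (n + 1 + 1) = 1 by omega]
      apply max_eq_right
      push_cast
      linarith
    have hprod : (∏ i ∈ Finset.Icc 2 (n + 1), max ((2 : ℤ) ^ (n + 3 - i) - (i : ℤ)) 1)
        ≤ 2 ^ S := by
      calc (∏ i ∈ Finset.Icc 2 (n + 1), max ((2 : ℤ) ^ (n + 3 - i) - (i : ℤ)) 1)
          ≤ ∏ i ∈ Finset.Icc 2 (n + 1), (2 : ℤ) ^ (n + 3 - i) := by
            refine Finset.prod_le_prod (fun i _ => le_trans zero_le_one (le_max_right _ _))
              (fun i _ => ?_)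
            refine max_le (sub_le_self _ (by positivity)) (one_le_pow₀ (by norm_num))
        _ = 2 ^ S := Finset.prod_pow_eq_pow_sum _ _ _
    have hone : (1 : ℤ) ≤ 2 ^ (n + 3) := one_le_pow₀ (by norm_num)
    have hnn : (0 : ℤ) ≤ (2 : ℤ) ^ (n + 2) * (2 ^ (n + 3) - 1) := by
      have : (0 : ℤ) ≤ (2 : ℤ) ^ (n + 2) := by positivity
      nlinarith
    -- main chain
    set X : ℤ := (2 : ℤ) ^ (c - (n + 3)) with hX
    have hXpos : (0 : ℤ) < X := by rw [hX]; positivity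
    have hkey : (2 : ℤ) ^ (n + 3) - 1 + (((n : ℤ) + 3) * ((n : ℤ) + 3) - ((n : ℤ) + 3))
        ≤ 2 ^ (n + 3 + 1) := by
      have hsq := sq_bound (n + 3) (by omega)
      have hsq' : ((n : ℤ) + 3) * ((n : ℤ) + 3) ≤ 2 ^ (n + 3) + (n : ℤ) + 3 + 1 := by
        exact_mod_cast hsq
      have hdbl : (2 : ℤ) ^ (n + 3 + 1) = 2 * 2 ^ (n + 3) := by ring
      linarith
    have h4 : ((2 : ℤ) ^ (n + 3) - 1 + (((n : ℤ) + 3) * ((n : ℤ) + 3) - ((n : ℤ) + 3))) * X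
        ≤ 2 ^ (n + 3 + 1) * X := mul_le_mul_of_nonneg_right hkey hXpos.le
    have h5 : (2 : ℤ) ^ (n + 3 + 1) * X = 2 ^ (c + 1) := by
      rw [hX, ← pow_add]
      congr 1
      omega
    have h6 : (2 : ℤ) ^ (n + 2) * (2 ^ (n + 3) - 1) * 2 ^ S * 2 = ((2 : ℤ) ^ (n + 3) - 1) * X := by
      rw [hX, show c - (n + 3) = (n + 3) + S from hE1.symm, pow_add, pow_add]
      ring
    have hcast : (2 : ℤ) ^ (c + 1) ≤ 2 * (G : ℤ)
        + (((n : ℤ) + 3) * ((n : ℤ) + 3) - ((n : ℤ) + 3)) * X := by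
      have htt : (n + 3) ≤ (n + 3) * (n + 3) := Nat.le_mul_of_pos_left _ (by omega)
      have := hcount
      zify [htt] at this
      convert this using 3 <;> push_cast <;> ring
    -- the goal
    have hgoal : (2 : ℤ) ^ (n + 3 - 1) * (2 ^ (n + 3) - 1) *
        ∏ i ∈ Finset.Icc 2 (n + 3 - 1), max ((2 : ℤ) ^ (n + 3 - i) - (i : ℤ)) 1
        = (2 : ℤ) ^ (n + 2) * (2 ^ (n + 3) - 1) *
          ((∏ i ∈ Finset.Icc 2 (n + 1), max ((2 : ℤ) ^ (n + 3 - i) - (i : ℤ)) 1) * 1) := by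
      rw [show n + 3 - 1 = n + 1 + 1 from rfl, hsplit, htop]
    rw [hgoal, mul_one]
    have hL : (2 : ℤ) ^ (n + 2) * (2 ^ (n + 3) - 1) *
        (∏ i ∈ Finset.Icc 2 (n + 1), max ((2 : ℤ) ^ (n + 3 - i) - (i : ℤ)) 1)
        ≤ (2 : ℤ) ^ (n + 2) * (2 ^ (n + 3) - 1) * 2 ^ S :=
      mul_le_mul_of_nonneg_left hprod hnn
    nlinarith [hL, h4, h5, h6, hcast, hXpos]
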